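/- There exist four agents with additive valuations on [0,1] and an allocation that is proportional on the complete graph K_4 (i.e., globally proportional: each agent values her piece at least 1/4) but is not locally proportional on the 4-cycle C_4. -/
import Mathlib

open Classical in
/-- Point mass at `p`. -/
noncomputable def pmass (p : ℝ) (X : Set ℝ) : ℝ := if p ∈ X then 1 else 0

lemma pmass_nonneg (p : ℝ) (X : Set ℝ) : 0 ≤ pmass p X := by
  unfold pmass; split <;> norm_num

lemma pmass_add (p : ℝ) {X Y : Set ℝ} (h : Disjoint X Y) :
    pmass p (X ∪ Y) = pmass p X + pmass p Y := by
  unfold pmass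
  by_cases hX : p ∈ X <;> by_cases hY : p ∈ Y
  · exact absurd hY (Set.disjoint_left.mp h hX)
  all_goals simp [hX, hY]

lemma pmass_mem {p : ℝ} {X : Set ℝ} (h : p ∈ X) : pmass p X = 1 := by
  simp [pmass, h]

lemma pmass_notMem {p : ℝ} {X : Set ℝ} (h : p ∉ X) : pmass p X = 0 := by
  simp [pmass, h]

set_option maxHeartbeats 1000000

/-- There exist four agents with nonnegative, additive valuations normalized to `1`
on `[0,1]`, and an allocation (a partition of `[0,1]`) that is globally proportional
(each agent values her own piece at least `1/4`) but not locally proportional on the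
4-cycle `C₄`, where the neighbors of agent `i` in `Fin 4` are `i+1` and `i-1`. -/
theorem global_proportional_not_locally_proportional_C4 :
    ∃ (v : Fin 4 → Set ℝ → ℝ) (A : Fin 4 → Set ℝ),
      (∀ i X, 0 ≤ v i X) ∧
      (∀ i X Y, Disjoint X Y → v i (X ∪ Y) = v i X + v i Y) ∧
      (∀ i, v i (Set.Icc (0:ℝ) 1) = 1) ∧
      (∀ i j, i ≠ j → Disjoint (A i) (A j)) ∧
      (⋃ i, A i) = Set.Icc (0:ℝ) 1 ∧
      (∀ i, (1/4 : ℝ) ≤ v i (A i)) ∧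
      ¬ (∀ i : Fin 4, (v i (A (i + 1)) + v i (A (i - 1))) / 2 ≤ v i (A i)) := by
  refine ⟨![fun X => (1/4) * pmass 0 X + (3/8) * pmass (1/4) X + (3/8) * pmass (3/4) X,
            fun X => pmass (1/4) X, fun X => pmass (1/2) X, fun X => pmass (3/4) X],
          ![Set.Ico 0 (1/4), Set.Ico (1/4) (1/2), Set.Ico (1/2) (3/4), Set.Icc (3/4) 1],
          ?_, ?_, ?_, ?_, ?_, ?_, ?_⟩
  · intro i X
    fin_cases i <;> simp <;>
      nlinarith [pmass_nonneg 0 X, pmass_nonneg (1/4 : ℝ) X, pmass_nonneg (1/2 : ℝ) X,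
        pmass_nonneg (3/4 : ℝ) X]
  · intro i X Y h
    fin_cases i <;> simp [pmass_add _ h] <;> ring
  · intro i
    have h0 : (0:ℝ) ∈ Set.Icc (0:ℝ) 1 := by norm_num
    have h1 : (1/4:ℝ) ∈ Set.Icc (0:ℝ) 1 := by norm_num
    have h2 : (1/2:ℝ) ∈ Set.Icc (0:ℝ) 1 := by norm_num
    have h3 : (3/4:ℝ) ∈ Set.Icc (0:ℝ) 1 := by norm_num
    fin_cases i
    · show (1/4) * pmass 0 (Set.Icc (0:ℝ) 1) + (3/8) * pmass (1/4) (Set.Icc (0:ℝ) 1)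
        + (3/8) * pmass (3/4) (Set.Icc (0:ℝ) 1) = 1
      rw [pmass_mem h0, pmass_mem h1, pmass_mem h3]; norm_num
    · show pmass (1/4) (Set.Icc (0:ℝ) 1) = 1
      exact pmass_mem h1
    · show pmass (1/2) (Set.Icc (0:ℝ) 1) = 1
      exact pmass_mem h2
    · show pmass (3/4) (Set.Icc (0:ℝ) 1) = 1
      exact pmass_mem h3
  · intro i j hij
    fin_cases i <;> fin_cases j <;>
      first
        | exact absurd rfl hij
        | (rw [Set.disjoint_left]
           rintro x hx hx'
           simp only [Matrix.cons_val_zero, Matrix.cons_val_one, Matrix.head_cons,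
             Matrix.cons_val_two, Matrix.tail_cons, Matrix.cons_val_three,
             Set.mem_Ico, Set.mem_Icc, Fin.isValue] at hx hx'
           linarith [hx.1, hx.2, hx'.1, hx'.2])
  · ext x
    simp only [Set.mem_iUnion, Set.mem_Icc]
    constructor
    · rintro ⟨i, hi⟩
      fin_cases i <;>
        simp only [Matrix.cons_val_zero, Matrix.cons_val_one, Matrix.head_cons,
          Matrix.cons_val_two, Matrix.tail_cons, Matrix.cons_val_three,
          Set.mem_Ico, Set.mem_Icc, Fin.isValue] at hi <;>
        constructor <;> linarith [hi.1, hi.2]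
    · rintro ⟨hx0, hx1⟩
      rcases lt_or_ge x (1/4) with h | h
      · exact ⟨0, by simp only [Matrix.cons_val_zero, Set.mem_Ico]; constructor <;> linarith⟩
      rcases lt_or_ge x (1/2) with h' | h'
      · exact ⟨1, by simp only [Matrix.cons_val_one, Matrix.head_cons, Set.mem_Ico]
                     constructor <;> linarith⟩
      rcases lt_or_ge x (3/4) with h'' | h''
      · refine ⟨2, ?_⟩
        show x ∈ Set.Ico (1/2 : ℝ) (3/4)
        exact ⟨h', h''⟩
      · refine ⟨3, ?_⟩
        show x ∈ Set.Icc (3/4 : ℝ) 1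
        exact ⟨h'', hx1⟩
  · intro i
    fin_cases i
    · show (1/4 : ℝ) ≤ (1/4) * pmass 0 (Set.Ico 0 (1/4)) + (3/8) * pmass (1/4) (Set.Ico 0 (1/4))
        + (3/8) * pmass (3/4) (Set.Ico 0 (1/4))
      rw [pmass_mem (by norm_num [Set.mem_Ico]), pmass_notMem (by norm_num [Set.mem_Ico]),
        pmass_notMem (by norm_num [Set.mem_Ico])]
      norm_num
    · show (1/4 : ℝ) ≤ pmass (1/4) (Set.Ico (1/4) (1/2))
      rw [pmass_mem (by norm_num [Set.mem_Ico])]; norm_num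
    · show (1/4 : ℝ) ≤ pmass (1/2) (Set.Ico (1/2) (3/4))
      rw [pmass_mem (by norm_num [Set.mem_Ico])]; norm_num
    · show (1/4 : ℝ) ≤ pmass (3/4) (Set.Icc (3/4) 1)
      rw [pmass_mem (by norm_num [Set.mem_Icc])]; norm_num
  · intro h
    have h0 := h 0
    rw [show (0:Fin 4) + 1 = 1 from rfl, show (0:Fin 4) - 1 = 3 from rfl] at h0
    have e : (((1/4) * pmass 0 (Set.Ico (1/4:ℝ) (1/2)) + (3/8) * pmass (1/4) (Set.Ico (1/4:ℝ) (1/2))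
          + (3/8) * pmass (3/4) (Set.Ico (1/4:ℝ) (1/2)))
        + ((1/4) * pmass 0 (Set.Icc (3/4:ℝ) 1) + (3/8) * pmass (1/4) (Set.Icc (3/4:ℝ) 1)
          + (3/8) * pmass (3/4) (Set.Icc (3/4:ℝ) 1))) / 2
        ≤ (1/4) * pmass 0 (Set.Ico (0:ℝ) (1/4)) + (3/8) * pmass (1/4) (Set.Ico (0:ℝ) (1/4))
          + (3/8) * pmass (3/4) (Set.Ico (0:ℝ) (1/4)) := h0
    rw [pmass_notMem (show (0:ℝ) ∉ Set.Ico (1/4:ℝ) (1/2) by norm_num [Set.mem_Ico]),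
      pmass_mem (show (1/4:ℝ) ∈ Set.Ico (1/4:ℝ) (1/2) by norm_num [Set.mem_Ico]),
      pmass_notMem (show (3/4:ℝ) ∉ Set.Ico (1/4:ℝ) (1/2) by norm_num [Set.mem_Ico]),
      pmass_notMem (show (0:ℝ) ∉ Set.Icc (3/4:ℝ) 1 by norm_num [Set.mem_Icc]),
      pmass_notMem (show (1/4:ℝ) ∉ Set.Icc (3/4:ℝ) 1 by norm_num [Set.mem_Icc]),
      pmass_mem (show (3/4:ℝ) ∈ Set.Icc (3/4:ℝ) 1 by norm_num [Set.mem_Icc]),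
      pmass_mem (show (0:ℝ) ∈ Set.Ico (0:ℝ) (1/4) by norm_num [Set.mem_Ico]),
      pmass_notMem (show (1/4:ℝ) ∉ Set.Ico (0:ℝ) (1/4) by norm_num [Set.mem_Ico]),
      pmass_notMem (show (3/4:ℝ) ∉ Set.Ico (0:ℝ) (1/4) by norm_num [Set.mem_Ico])] at e
    norm_num at e
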